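/- Consider the VNLM. For every ε > 0 there exist δ > 0 and an initial value x₀*(ε) > 0 such that every solution x of the VNLM on an interval [0, b) with b > δ and x(0) = x₀*(ε) satisfies x(t) > k_max·(r/(a·k_min) + 1) + ε for all t ∈ [0, δ]. -/

import Mathlib

open Set Filter MeasureTheory

/-- The variable carrying capacity `k(t) = (k_max − k_min)·(cos(dπt)+1)/2 + k_min`. -/
noncomputable def kcap (kmin kmax d t : ℝ) : ℝ :=
  (kmax - kmin) * ((Real.cos (d * Real.pi * t) + 1) / 2) + kmin

/-- The cumulative density `h(t) = a·∫₀ᵗ x(s) ds`. -/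
noncomputable def hcum (a : ℝ) (x : ℝ → ℝ) (t : ℝ) : ℝ :=
  a * ∫ s in (0:ℝ)..t, x s

/-- `x` is a (C¹) solution of the VNLM on the set `D`. -/
def IsVNLMSolOn (a r d kmin kmax : ℝ) (x : ℝ → ℝ) (D : Set ℝ) : Prop :=
  ContinuousOn x D ∧
  ∀ t ∈ D, HasDerivWithinAt x
    ((r - hcum a x t) * x t * (1 - x t / kcap kmin kmax d t)) D t

lemma kcap_bounds (kmin kmax d t : ℝ) (hk : kmin ≤ kmax) :
    kmin ≤ kcap kmin kmax d t ∧ kcap kmin kmax d t ≤ kmax := by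
  unfold kcap
  constructor <;>
    nlinarith [Real.neg_one_le_cos (d * Real.pi * t), Real.cos_le_one (d * Real.pi * t)]

lemma vnlm_key_ineq (r kmin k h v : ℝ) (hr : 0 < r) (hkmin : 0 < kmin)
    (hk1 : kmin ≤ k) (hv : k < v) (hh : 0 ≤ h) :
    -(2 * r / kmin * v ^ 2) < (r - h) * v * (1 - v / k) := by
  have hk0 : 0 < k := lt_of_lt_of_le hkmin hk1
  have hv0 : 0 < v := lt_trans hk0 hv
  have h1 : (r - h) * v * (1 - v / k) = ((r - h) * v * (k - v)) / k := by
    field_simp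
  have h2 : -(2 * r / kmin * v ^ 2) = (-(2 * r * v ^ 2)) / kmin := by ring
  rw [h1, h2, div_lt_div_iff₀ hkmin hk0]
  rcases le_or_gt h r with hc | hc
  · nlinarith [mul_nonneg (mul_nonneg (mul_nonneg hh hv0.le) (sub_nonneg.2 hv.le)) hkmin.le,
      mul_nonneg (mul_nonneg (mul_nonneg hr.le hv0.le) (sub_nonneg.2 hv.le)) (sub_nonneg.2 hk1),
      mul_pos (mul_pos (mul_pos hr hv0) hk0) hkmin,
      mul_pos (mul_pos (mul_pos hr hv0) hv0) hk0]
  · have hpos : 0 < (h - r) * v * (v - k) * kmin :=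
      mul_pos (mul_pos (mul_pos (by linarith) hv0) (by linarith)) hkmin
    nlinarith [mul_pos (mul_pos (mul_pos hr (mul_pos hv0 hv0)) hk0) (by norm_num : (0:ℝ) < 2)]

lemma vnlm_aux_slope_pos {F : ℝ → ℝ} {U u : Set ℝ} {c dd : ℝ}
    (hF : HasDerivWithinAt F dd U c) (hd : 0 < dd) (hFc : F c = 0)
    (hu : u ⊆ U \ {c}) (hu' : ∀ s ∈ u, c < s) :
    ∀ᶠ s in nhdsWithin c u, 0 < F s := by
  have hs := hasDerivWithinAt_iff_tendsto_slope.1 hF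
  have h2 : Tendsto (slope F c) (nhdsWithin c u) (nhds dd) :=
    hs.mono_left (nhdsWithin_mono _ hu)
  have h3 : ∀ᶠ s in nhdsWithin c u, 0 < slope F c s := h2.eventually (eventually_gt_nhds hd)
  filter_upwards [h3, eventually_mem_nhdsWithin] with s hsl hmem
  have hcs : c < s := hu' s hmem
  have hne : s - c ≠ 0 := by intro h; apply absurd hcs; simp [sub_eq_zero.1 h]
  have hFs : F s = slope F c s * (s - c) := by
    rw [slope_def_field, hFc, sub_zero, div_mul_cancel₀ _ hne]
  rw [hFs]
  exact mul_pos hsl (by linarith)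

theorem vnlm_stays_large (a r d kmin kmax : ℝ)
    (ha : 0 < a) (hr : 0 < r) (hd : 0 < d)
    (hkmin : 0 < kmin) (hk : kmin ≤ kmax) :
    ∀ ε : ℝ, 0 < ε → ∃ δ : ℝ, 0 < δ ∧ ∃ x0 : ℝ, 0 < x0 ∧
      ∀ b : EReal, (δ : EReal) < b →
        ∀ x : ℝ → ℝ, x 0 = x0 →
          IsVNLMSolOn a r d kmin kmax x {t : ℝ | 0 ≤ t ∧ (t : EReal) < b} →
          ∀ t ∈ Set.Icc (0:ℝ) δ, kmax * (r / (a * kmin) + 1) + ε < x t := by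
  intro ε hε
  have hkmax : 0 < kmax := lt_of_lt_of_le hkmin hk
  set M : ℝ := kmax * (r / (a * kmin) + 1) + ε with hMdef
  have hMk : kmax < M := by
    rw [hMdef]
    nlinarith [mul_pos hkmax (div_pos hr (mul_pos ha hkmin))]
  have hM1 : (0:ℝ) < M + 1 := by linarith
  set x0 : ℝ := 2 * (M + 1) with hx0def
  have hx0pos : 0 < x0 := by rw [hx0def]; linarith
  set c0 : ℝ := 2 * r / kmin * x0 with hc0def
  have hc0pos : 0 < c0 := by rw [hc0def]; positivity
  set δ : ℝ := 1 / c0 with hδdef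
  have hδpos : 0 < δ := by rw [hδdef]; positivity
  refine ⟨δ, hδpos, x0, hx0pos, ?_⟩
  intro b hb x hx00 hsol
  obtain ⟨hxcont, hxderiv⟩ := hsol
  set Dset : Set ℝ := {t : ℝ | 0 ≤ t ∧ (t : EReal) < b} with hDdef
  have hsub : Icc (0:ℝ) δ ⊆ Dset := by
    intro t ht
    exact ⟨ht.1, lt_of_le_of_lt (EReal.coe_le_coe_iff.2 ht.2) hb⟩
  set φ : ℝ → ℝ := fun s => x0 / (1 + c0 * s) with hφdef
  have hden : ∀ s : ℝ, 0 ≤ s → (0:ℝ) < 1 + c0 * s := by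
    intro s hs; nlinarith
  have hc0δ : c0 * δ = 1 := by
    rw [hδdef]; field_simp
  have hφδ : φ δ = M + 1 := by
    simp only [hφdef]
    rw [hc0δ, hx0def]
    norm_num
  have hφlb : ∀ s ∈ Icc (0:ℝ) δ, M + 1 ≤ φ s := by
    intro s hs
    rw [← hφδ]
    simp only [hφdef]
    rw [div_le_div_iff₀ (hden δ hδpos.le) (hden s hs.1)]
    nlinarith [mul_le_mul_of_nonneg_left hs.2 (mul_nonneg hx0pos.le hc0pos.le)]
  -- the invariant set
  set S : Set ℝ := {t | t ∈ Icc (0:ℝ) δ ∧ ∀ s ∈ Icc (0:ℝ) t, φ s ≤ x s} with hSdef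
  have hφ0 : φ 0 = x0 := by simp [hφdef]
  have h0S : (0:ℝ) ∈ S := by
    refine ⟨⟨le_refl 0, hδpos.le⟩, ?_⟩
    intro s hs
    have hs0 : s = 0 := le_antisymm hs.2 hs.1
    rw [hs0, hφ0, hx00]
  have hSne : S.Nonempty := ⟨0, h0S⟩
  have hbdd : BddAbove S := ⟨δ, fun t ht => ht.1.2⟩
  set c := sSup S with hcdef
  have hc0' : 0 ≤ c := le_csSup hbdd h0S
  have hcδ : c ≤ δ := csSup_le hSne fun t ht => ht.1.2
  have hlt : ∀ s, 0 ≤ s → s < c → φ s ≤ x s := by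
    intro s hs hsc
    obtain ⟨t, htS, hst⟩ := exists_lt_of_lt_csSup hSne hsc
    exact htS.2 s ⟨hs, hst.le⟩
  have hcS : c ∈ S := by
    refine ⟨⟨hc0', hcδ⟩, ?_⟩
    intro s hs
    rcases lt_or_eq_of_le hs.2 with h | h
    · exact hlt s hs.1 h
    · subst h
      rcases eq_or_lt_of_le hc0' with h0 | h0
      · rw [← h0, hφ0, hx00]
      · -- limit argument from the left
        have hIco : Ico (0:ℝ) c ⊆ Icc 0 δ := fun u hu => ⟨hu.1, le_trans hu.2.le hcδ⟩
        have hxc : ContinuousWithinAt x (Icc 0 δ) c := (hxcont.mono hsub) c ⟨hc0', hcδ⟩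
        have hφc : ContinuousWithinAt φ (Icc 0 δ) c := by
          have hca : ContinuousAt (fun s : ℝ => x0 / (1 + c0 * s)) c :=
            ContinuousAt.div continuousAt_const (by fun_prop) (ne_of_gt (hden c hc0'))
          exact hca.continuousWithinAt
        have hF : Tendsto (fun u => x u - φ u) (nhdsWithin c (Ico 0 c)) (nhds (x c - φ c)) :=
          (hxc.sub hφc).mono_left (nhdsWithin_mono _ hIco)
        haveI : (nhdsWithin c (Ico 0 c)).NeBot := by
          rw [nhdsWithin_Ico_eq_nhdsLT h0]
          infer_instance
        have hge : 0 ≤ x c - φ c := by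
          apply ge_of_tendsto hF
          filter_upwards [eventually_mem_nhdsWithin] with u hu
          exact sub_nonneg.2 (hlt u hu.1 hu.2)
        linarith
  -- the sup equals δ
  have hceq : c = δ := by
    by_contra hnec
    have hclt : c < δ := lt_of_le_of_ne hcδ hnec
    have hxφc : φ c ≤ x c := hcS.2 c ⟨hc0', le_refl c⟩
    have hIocD : Ioc c δ ⊆ Dset := fun u hu =>
      hsub ⟨le_trans hc0' hu.1.le, hu.2⟩
    have hev : ∀ᶠ s in nhdsWithin c (Ioc c δ), φ s < x s := by
      rcases eq_or_lt_of_le hxφc with heq | hlt2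
      · -- contact point: derivative argument
        have hcD : c ∈ Dset := hsub ⟨hc0', hcδ⟩
        have hxd := hxderiv c hcD
        have hh : 0 ≤ hcum a x c := by
          apply mul_nonneg ha.le
          apply intervalIntegral.integral_nonneg hc0'
          intro u hu
          have h1 := hcS.2 u hu
          have h2 := hφlb u ⟨hu.1, le_trans hu.2 hcδ⟩
          linarith
        have hkc := kcap_bounds kmin kmax d c hk
        have hkv : kcap kmin kmax d c < x c := by
          have h3 := hφlb c ⟨hc0', hcδ⟩
          linarith [hkc.2]
        have hkey := vnlm_key_ineq r kmin (kcap kmin kmax d c) (hcum a x c) (x c)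
          hr hkmin hkc.1 hkv hh
        have hgd : HasDerivAt (fun u : ℝ => 1 + c0 * u) c0 c := by
          simpa using ((hasDerivAt_id c).const_mul c0).const_add 1
        have hgne : (1 + c0 * c) ≠ 0 := ne_of_gt (hden c hc0')
        have hφd : HasDerivAt φ (-(2 * r / kmin * (x c) ^ 2)) c := by
          have hd1 := (hasDerivAt_const c x0).div hgd hgne
          have heq2 : (0 * (1 + c0 * c) - x0 * c0) / (1 + c0 * c) ^ 2
              = -(2 * r / kmin * (x c) ^ 2) := by
            rw [← heq]
            simp only [hφdef]
            rw [div_pow, hc0def]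
            field_simp
            ring
          rw [← heq2]
          exact hd1
        have hFd : HasDerivWithinAt (fun u => x u - φ u)
            ((r - hcum a x c) * x c * (1 - x c / kcap kmin kmax d c)
              - (-(2 * r / kmin * (x c) ^ 2))) Dset c :=
          hxd.sub (hφd.hasDerivWithinAt)
        have hpos : 0 < (r - hcum a x c) * x c * (1 - x c / kcap kmin kmax d c)
            - (-(2 * r / kmin * (x c) ^ 2)) := by linarith
        have hFc0 : x c - φ c = 0 := sub_eq_zero.2 heq.symm
        have hIoc' : Ioc c δ ⊆ Dset \ {c} := fun u hu =>
          ⟨hIocD hu, fun hu' => absurd hu.1 (by simp [mem_singleton_iff.1 hu'])⟩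
        have := vnlm_aux_slope_pos hFd hpos hFc0 hIoc' (fun u hu => hu.1)
        filter_upwards [this] with u hu
        linarith
      · -- strict inequality extends by continuity
        have hcD : c ∈ Dset := hsub ⟨hc0', hcδ⟩
        have hxc : ContinuousWithinAt x Dset c := hxcont c hcD
        have hφc : ContinuousWithinAt φ Dset c := by
          have hca : ContinuousAt (fun s : ℝ => x0 / (1 + c0 * s)) c :=
            ContinuousAt.div continuousAt_const (by fun_prop) (ne_of_gt (hden c hc0'))
          exact hca.continuousWithinAt
        have hF : Tendsto (fun u => x u - φ u) (nhdsWithin c Dset) (nhds (x c - φ c)) :=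
          hxc.sub hφc
        have hev0 : ∀ᶠ u in nhdsWithin c Dset, 0 < x u - φ u :=
          hF.eventually (eventually_gt_nhds (by linarith))
        have := hev0.filter_mono (nhdsWithin_mono _ hIocD)
        filter_upwards [this] with u hu
        linarith
    rw [nhdsWithin_Ioc_eq_nhdsGT hclt] at hev
    obtain ⟨u, hu, hsub2⟩ := mem_nhdsGT_iff_exists_Ioc_subset.1 hev
    set t' := min u δ with ht'def
    have hct' : c < t' := lt_min hu hclt
    have ht'S : t' ∈ S := by
      refine ⟨⟨le_trans hc0' hct'.le, min_le_right _ _⟩, ?_⟩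
      intro s hs
      rcases le_or_gt s c with hsc | hsc
      · exact hcS.2 s ⟨hs.1, hsc⟩
      · exact (hsub2 ⟨hsc, le_trans hs.2 (min_le_left _ _)⟩).le
    exact absurd (le_csSup hbdd ht'S) (not_le.2 hct')
  -- conclusion
  intro t ht
  have h1 : φ t ≤ x t := by
    have := hcS.2
    rw [hceq] at this
    exact this t ht
  have h2 := hφlb t ht
  linarith
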